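/- If the quaternary quartic polynomial Q = X₄⁴ + X₁²X₂² + X₁²X₃² + X₂²X₃² - 4X₁X₂X₃X₄ satisfies that Q^k is a sum of squares of real polynomials for some odd k ≥ 1, then the k-th power of the Motzkin polynomial m(x,y) = x⁴y² + x²y⁴ + 1 - 3x²y² is also a sum of squares of real polynomials. -/
import Mathlib


open MvPolynomial

theorem Q_sos_implies_motzkin_sos (k : ℕ) (hk : Odd k) (hk1 : 1 ≤ k)
    (hQ : ∃ (r : ℕ) (H : Fin r → MvPolynomial (Fin 4) ℝ),
      (X 3 ^ 4 + X 0 ^ 2 * X 1 ^ 2 + X 0 ^ 2 * X 2 ^ 2 + X 1 ^ 2 * X 2 ^ 2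
        - 4 * X 0 * X 1 * X 2 * X 3 : MvPolynomial (Fin 4) ℝ) ^ k = ∑ i, (H i) ^ 2) :
    ∃ (r : ℕ) (h : Fin r → MvPolynomial (Fin 2) ℝ),
      (X 0 ^ 4 * X 1 ^ 2 + X 0 ^ 2 * X 1 ^ 4 + 1 - 3 * X 0 ^ 2 * X 1 ^ 2
        : MvPolynomial (Fin 2) ℝ) ^ k = ∑ i, (h i) ^ 2 := by
  obtain ⟨r, H, hH⟩ := hQ
  set f : Fin 4 → MvPolynomial (Fin 2) ℝ := ![X 0, X 1, X 0 * X 1, 1]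
  set φ : MvPolynomial (Fin 4) ℝ →+* MvPolynomial (Fin 2) ℝ := (aeval f).toRingHom
  refine ⟨r, fun i => φ (H i), ?_⟩
  have := congrArg φ hH
  simp only [map_pow, map_sum] at this
  rw [← this]
  congr 1
  simp only [φ, f, map_sub, map_add, map_mul, map_pow, map_ofNat, AlgHom.toRingHom_eq_coe,
    RingHom.coe_coe, aeval_X]
  simp [Matrix.cons_val_one]
  ring
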